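/- D(⟦−1, 1⟧) = 2, and for every integer m ≥ 2, D(⟦−m, m⟧) = 2m − 1. -/

import Mathlib

private lemma take_sum_mono {L : List ℤ} (h0 : ∀ x ∈ L, (0:ℤ) ≤ x) {i j : ℕ} (hij : i ≤ j) :
    (L.take i).sum ≤ (L.take j).sum := by
  rw [show j = i + (j - i) by omega, List.take_add, List.sum_append]
  have : 0 ≤ ((L.drop i).take (j-i)).sum :=
    List.sum_nonneg fun x hx => h0 x (List.mem_of_mem_drop (List.mem_of_mem_take hx))
  linarith

private lemma take_succ_sum_le {L : List ℤ} {a : ℤ} (ha : ∀ x ∈ L, x ≤ a) {k : ℕ}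
    (hk : k < L.length) :
    (L.take (k+1)).sum ≤ (L.take k).sum + a := by
  rw [List.take_succ, List.sum_append, List.getElem?_eq_getElem hk]
  simp only [Option.toList_some, List.sum_cons, List.sum_nil]
  have := ha _ (List.getElem_mem hk)
  linarith

private lemma take_coe_le (L : List ℤ) {i j : ℕ} (hij : i ≤ j) :
    ((L.take i : List ℤ) : Multiset ℤ) ≤ (L.take j : List ℤ) := by
  have h : List.Sublist (L.take i) (L.take j) := by
    rw [show L.take i = (L.take j).take i by rw [List.take_take, min_eq_left hij]]
    exact List.take_sublist _ _
  exact h.subperm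

private lemma sub_sum_eq {A B : Multiset ℤ} (h : A ≤ B) : (B - A).sum = B.sum - A.sum := by
  have h1 : B - A + A = B := tsub_add_cancel_of_le h
  have h2 : (B - A + A).sum = B.sum := by rw [h1]
  rw [Multiset.sum_add] at h2
  linarith

private lemma sub_card_eq {A B : Multiset ℤ} (h : A ≤ B) :
    Multiset.card (B - A) = Multiset.card B - Multiset.card A := by
  have h1 : B - A + A = B := tsub_add_cancel_of_le h
  have h2 := congrArg Multiset.card h1
  rw [Multiset.card_add] at h2
  omega

private lemma key {a : ℤ} (ha1 : 1 ≤ a) {P N : Multiset ℤ}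
    (hPa : ∀ x ∈ P, x ≤ a)
    (hN1 : ∀ x ∈ N, (1:ℤ) ≤ x)
    (hsum : P.sum = N.sum)
    (hmin : ∀ P' N', P' ≤ P → N' ≤ N → P'.sum = N'.sum →
        (P' = 0 ∧ N' = 0) ∨ (P' = P ∧ N' = N)) :
    (Multiset.card N : ℤ) ≤ a := by
  by_contra hq
  push_neg at hq
  set LP := P.toList with hLP
  set LN := N.toList with hLN
  have hPL : (LP : Multiset ℤ) = P := Multiset.coe_toList P
  have hNL : (LN : Multiset ℤ) = N := Multiset.coe_toList N
  have hmemP : ∀ x ∈ LP, x ∈ P := fun x hx => Multiset.mem_toList.mp hx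
  have hmemN : ∀ x ∈ LN, x ∈ N := fun x hx => Multiset.mem_toList.mp hx
  set q := Multiset.card N with hqdef
  have hLNlen : LN.length = q := Multiset.length_toList N
  set S : ℕ → ℤ := fun k => (LP.take k).sum with hSdef
  set T : ℕ → ℤ := fun j => (LN.take j).sum with hTdef
  have hSfull : S LP.length = P.sum := by
    simp only [hSdef, List.take_length]
    rw [← hPL, Multiset.sum_coe]
  have hN0 : ∀ x ∈ LN, (0:ℤ) ≤ x := fun x hx => le_trans one_pos.le (hN1 x (hmemN x hx))
  have hP0' : ∀ x ∈ LP, x ≤ a := fun x hx => hPa x (hmemP x hx)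
  have takefull : ∀ (L : List ℤ) (i : ℕ), ((L.take i : List ℤ) : Multiset ℤ) ≤ (L : Multiset ℤ) :=
    fun L i => (List.take_sublist i L).subperm
  have hTmono : ∀ {i j : ℕ}, i ≤ j → T i ≤ T j := fun h => take_sum_mono hN0 h
  have hT0 : ∀ j, 0 ≤ T j := fun j => hTmono (Nat.zero_le j)
  -- T j < P.sum for j < q
  have hTlt : ∀ j < q, T j < P.sum := by
    intro j hj
    have hsplit : (LN.take j).sum + (LN.drop j).sum = N.sum := by
      rw [← List.sum_append, List.take_append_drop, ← hNL, Multiset.sum_coe]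
    have hdne : LN.drop j ≠ [] := by
      intro h
      have := (List.length_drop : (LN.drop j).length = LN.length - j)
      rw [h] at this
      simp at this
      omega
    obtain ⟨y, hy⟩ := List.exists_mem_of_ne_nil _ hdne
    have hy1 : (1:ℤ) ≤ y := hN1 y (hmemN y (List.mem_of_mem_drop hy))
    have hysum : y ≤ (LN.drop j).sum := by
      have : ∀ x ∈ (LN.drop j : Multiset ℤ), (0:ℤ) ≤ x := fun x hx =>
        le_trans one_pos.le (hN1 x (hmemN x (List.mem_of_mem_drop (Multiset.mem_coe.mp hx))))
      have := Multiset.single_le_sum this y (Multiset.mem_coe.mpr hy)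
      simpa using this
    rw [hsum]
    have : T j = (LN.take j).sum := rfl
    linarith
  set K : ℕ → ℕ := fun j => Nat.findGreatest (fun k => S k ≤ T j) LP.length with hKdef
  have hKle : ∀ j, K j ≤ LP.length := fun j => Nat.findGreatest_le _
  have hKspec : ∀ j, S (K j) ≤ T j := by
    intro j
    exact Nat.findGreatest_spec (P := fun k => S k ≤ T j) (Nat.zero_le _)
      (by simp only [hSdef, List.take_zero, List.sum_nil]; exact hT0 j)
  have hKmono : ∀ {i j : ℕ}, i ≤ j → K i ≤ K j := by
    intro i j hij
    exact Nat.findGreatest_mono (fun k hk => le_trans hk (hTmono hij)) le_rfl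
  have hKlt : ∀ j < q, K j < LP.length := by
    intro j hj
    rcases lt_or_eq_of_le (hKle j) with h | h
    · exact h
    · exfalso
      have := hKspec j
      rw [h, hSfull] at this
      exact absurd this (not_le.mpr (hTlt j hj))
  have hKgap : ∀ j < q, T j < S (K j) + a := by
    intro j hj
    have h1 : ¬ (S (K j + 1) ≤ T j) :=
      Nat.findGreatest_is_greatest (Nat.lt_succ_self _) (hKlt j hj)
    have h2 : S (K j + 1) ≤ S (K j) + a := take_succ_sum_le hP0' (hKlt j hj)
    linarith [not_le.mp h1]
  -- d j ≥ 1 for 1 ≤ j ≤ q - 1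
  have hd1 : ∀ j, 1 ≤ j → j < q → S (K j) < T j := by
    intro j h1 h2
    rcases lt_or_eq_of_le (hKspec j) with h | h
    · exact h
    · exfalso
      have hP' : ((LP.take (K j) : List ℤ) : Multiset ℤ) ≤ P := by
        rw [← hPL]; exact takefull LP _
      have hN' : ((LN.take j : List ℤ) : Multiset ℤ) ≤ N := by
        rw [← hNL]; exact takefull LN _
      have hsums : ((LP.take (K j) : List ℤ) : Multiset ℤ).sum
          = ((LN.take j : List ℤ) : Multiset ℤ).sum := by
        rw [Multiset.sum_coe, Multiset.sum_coe]; exact h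
      rcases hmin _ _ hP' hN' hsums with ⟨_, hc⟩ | ⟨_, hc⟩
      · have := congrArg Multiset.card hc
        simp only [Multiset.coe_card, Multiset.card_zero, List.length_take] at this
        omega
      · have := congrArg Multiset.card hc
        rw [← hNL] at this
        simp only [Multiset.coe_card, List.length_take] at this
        omega
  -- pigeonhole
  have hmap : ∀ j ∈ Finset.Ico 1 q, (T j - S (K j)) ∈ Finset.Ico (1:ℤ) a := by
    intro j hj
    rw [Finset.mem_Ico] at hj ⊢
    constructor
    · linarith [hd1 j hj.1 hj.2]
    · linarith [hKgap j hj.2]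
  have hcards : (Finset.Ico (1:ℤ) a).card < (Finset.Ico 1 q).card := by
    rw [Int.card_Ico, Nat.card_Ico]
    have : a < (q : ℤ) := hq
    omega
  obtain ⟨i, hi, j, hj, hij, heq⟩ :=
    Finset.exists_ne_map_eq_of_card_lt_of_maps_to hcards hmap
  rw [Finset.mem_Ico] at hi hj
  -- wlog i < j
  wlog hlt : i < j generalizing i j
  · exact this j hj i hi hij.symm heq.symm (by omega)
  have hKij : K i ≤ K j := hKmono hlt.le
  have hPAB : ((LP.take (K i) : List ℤ) : Multiset ℤ) ≤ ((LP.take (K j) : List ℤ) : Multiset ℤ) :=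
    take_coe_le LP hKij
  have hNAB : ((LN.take i : List ℤ) : Multiset ℤ) ≤ ((LN.take j : List ℤ) : Multiset ℤ) :=
    take_coe_le LN hlt.le
  have hPBP : ((LP.take (K j) : List ℤ) : Multiset ℤ) ≤ P := by
    rw [← hPL]; exact takefull LP _
  have hNBN : ((LN.take j : List ℤ) : Multiset ℤ) ≤ N := by
    rw [← hNL]; exact takefull LN _
  have hsum' : (((LP.take (K j) : List ℤ) : Multiset ℤ) - ((LP.take (K i) : List ℤ) : Multiset ℤ)).sum
      = (((LN.take j : List ℤ) : Multiset ℤ) - ((LN.take i : List ℤ) : Multiset ℤ)).sum := by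
    rw [sub_sum_eq hPAB, sub_sum_eq hNAB]
    have e1 : ((LP.take (K i) : List ℤ) : Multiset ℤ).sum = S (K i) := Multiset.sum_coe _
    have e2 : ((LP.take (K j) : List ℤ) : Multiset ℤ).sum = S (K j) := Multiset.sum_coe _
    have e3 : ((LN.take i : List ℤ) : Multiset ℤ).sum = T i := Multiset.sum_coe _
    have e4 : ((LN.take j : List ℤ) : Multiset ℤ).sum = T j := Multiset.sum_coe _
    rw [e1, e2, e3, e4]
    linarith [heq]
  have hle1 : ((LP.take (K j) : List ℤ) : Multiset ℤ) - ((LP.take (K i) : List ℤ) : Multiset ℤ) ≤ P :=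
    le_trans tsub_le_self hPBP
  have hle2 : ((LN.take j : List ℤ) : Multiset ℤ) - ((LN.take i : List ℤ) : Multiset ℤ) ≤ N :=
    le_trans tsub_le_self hNBN
  have hcardN' : Multiset.card (((LN.take j : List ℤ) : Multiset ℤ) - ((LN.take i : List ℤ) : Multiset ℤ))
      = j - i := by
    rw [sub_card_eq hNAB]
    simp only [Multiset.coe_card, List.length_take]
    omega
  rcases hmin _ _ hle1 hle2 hsum' with ⟨_, hc⟩ | ⟨_, hc⟩
  · rw [hc] at hcardN'
    simp only [Multiset.card_zero] at hcardN'
    omega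
  · have h5 := congrArg Multiset.card hc
    rw [hcardN'] at h5
    omega

private lemma map_neg_sum (t : Multiset ℤ) : (t.map (fun x => -x)).sum = -t.sum := by
  induction t using Multiset.induction with
  | empty => simp
  | cons a t ih => simp only [Multiset.map_cons, Multiset.sum_cons, ih]; ring


/-- A minimal zero-sum sequence over `X`: a non-empty multiset of elements of `X`
whose sum is `0` and such that no non-empty proper sub-multiset has sum `0`. -/
def IsMinZeroSumSeq {G : Type*} [AddCommGroup G] (X : Set G) (s : Multiset G) : Prop :=
  s ≠ 0 ∧ (∀ x ∈ s, x ∈ X) ∧ s.sum = 0 ∧ ∀ t < s, t ≠ 0 → t.sum ≠ 0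

/-- The Davenport constant of a subset `X` of an abelian group: the supremum of the
lengths of minimal zero-sum sequences over `X` (0 if there are none). -/
noncomputable def davenport {G : Type*} [AddCommGroup G] (X : Set G) : ℕ∞ :=
  ⨆ (s : Multiset G) (_ : IsMinZeroSumSeq X s), (Multiset.card s : ℕ∞)


private lemma core {m : ℤ} (hm : 1 ≤ m) {s : Multiset ℤ}
    (hs : IsMinZeroSumSeq (Set.Icc (-m) m) s) :
    (Multiset.card s : ℤ) ≤ 2*m ∧ (2 ≤ m → (Multiset.card s : ℤ) ≤ 2*m - 1) := by
  obtain ⟨hne, hmem, hsum, hmin⟩ := hs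
  by_cases h0 : (0:ℤ) ∈ s
  · -- s = {0}
    have hs0 : s = {0} := by
      by_contra h
      have h1 : ({0} : Multiset ℤ) ≤ s := Multiset.singleton_le.mpr h0
      exact hmin {0} (lt_of_le_of_ne h1 (Ne.symm h)) (by simp) (by simp)
    rw [hs0]
    simp only [Multiset.card_singleton, Nat.cast_one]
    exact ⟨by linarith, fun _ => by linarith⟩
  · -- no zeros
    set Pp := s.filter (fun x => 0 < x) with hPp
    set Np := s.filter (fun x => x < 0) with hNp
    set N := Np.map (fun x => -x) with hNdef
    have hsplit : Pp + Np = s := by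
      rw [hPp, hNp]
      have h1 := Multiset.filter_add_not (fun x => 0 < x) s
      have h2 : s.filter (fun x => ¬ 0 < x) = s.filter (fun x => x < 0) := by
        apply Multiset.filter_congr
        intro x hx
        have : x ≠ 0 := fun h => h0 (h ▸ hx)
        constructor <;> intro h <;> omega
      rw [h2] at h1
      exact h1
    have hmapN : N.map (fun x => -x) = Np := by
      rw [hNdef, Multiset.map_map]
      simp
    have hNpsum : Np.sum = -N.sum := by
      have := map_neg_sum Np
      rw [← hNdef] at this
      linarith
    have hsumPN : Pp.sum = N.sum := by
      have h1 : Pp.sum + Np.sum = s.sum := by rw [← hsplit, Multiset.sum_add]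
      rw [hsum] at h1
      linarith [hNpsum]
    have hPp1 : ∀ x ∈ Pp, (1:ℤ) ≤ x := by
      intro x hx
      have := Multiset.of_mem_filter hx
      omega
    have hPpm : ∀ x ∈ Pp, x ≤ m := fun x hx =>
      (hmem x (Multiset.mem_of_mem_filter hx)).2
    have hN1 : ∀ x ∈ N, (1:ℤ) ≤ x := by
      intro x hx
      rw [hNdef, Multiset.mem_map] at hx
      obtain ⟨y, hy, rfl⟩ := hx
      have := Multiset.of_mem_filter hy
      omega
    have hNm : ∀ x ∈ N, x ≤ m := by
      intro x hx
      rw [hNdef, Multiset.mem_map] at hx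
      obtain ⟨y, hy, rfl⟩ := hx
      have := (hmem y (Multiset.mem_of_mem_filter hy)).1
      omega
    have hmin' : ∀ P' N', P' ≤ Pp → N' ≤ N → P'.sum = N'.sum →
        (P' = 0 ∧ N' = 0) ∨ (P' = Pp ∧ N' = N) := by
      intro P' N' hP' hN' hPN
      have hNmap : N'.map (fun x => -x) ≤ Np := by
        rw [← hmapN]
        exact Multiset.map_le_map hN'
      have hts : P' + N'.map (fun x => -x) ≤ s := by
        rw [← hsplit]
        exact add_le_add hP' hNmap
      have htsum : (P' + N'.map (fun x => -x)).sum = 0 := by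
        rw [Multiset.sum_add]
        rw [map_neg_sum, hPN]
        ring
      by_cases ht0 : P' + N'.map (fun x => -x) = 0
      · left
        rw [add_eq_zero] at ht0
        refine ⟨ht0.1, ?_⟩
        have := ht0.2
        rwa [Multiset.map_eq_zero] at this
      · by_cases hts' : P' + N'.map (fun x => -x) = s
        · right
          have hcard : Multiset.card P' + Multiset.card (N'.map (fun x => -x))
              = Multiset.card Pp + Multiset.card Np := by
            have := congrArg Multiset.card hts'
            rw [Multiset.card_add] at this
            rw [this, ← hsplit, Multiset.card_add]
          have hc1 : Multiset.card P' ≤ Multiset.card Pp := Multiset.card_le_card hP'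
          have hc2 : Multiset.card (N'.map (fun x => -x)) ≤ Multiset.card Np :=
            Multiset.card_le_card hNmap
          have e1 : P' = Pp := Multiset.eq_of_le_of_card_le hP' (by omega)
          have e2 : N'.map (fun x => -x) = Np := Multiset.eq_of_le_of_card_le hNmap (by omega)
          refine ⟨e1, ?_⟩
          have h3 := congrArg (Multiset.map (fun x : ℤ => -x)) e2
          have h4 : (N'.map (fun x => -x)).map (fun x : ℤ => -x) = N' := by
            rw [Multiset.map_map]; simp
          rw [h4, ← hNdef] at h3
          exact h3
        · exact absurd htsum (hmin _ (lt_of_le_of_ne hts hts') ht0)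
    have hmin'' : ∀ N' P', N' ≤ N → P' ≤ Pp → N'.sum = P'.sum →
        (N' = 0 ∧ P' = 0) ∨ (N' = N ∧ P' = Pp) := fun N' P' hN' hP' h =>
      (hmin' P' N' hP' hN' h.symm).imp (fun ⟨x, y⟩ => ⟨y, x⟩) (fun ⟨x, y⟩ => ⟨y, x⟩)
    have hqm : (Multiset.card N : ℤ) ≤ m := key hm hPpm hN1 hsumPN hmin'
    have hpm : (Multiset.card Pp : ℤ) ≤ m := key hm hNm hPp1 hsumPN.symm hmin''
    have hcards : Multiset.card s = Multiset.card Pp + Multiset.card N := by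
      rw [← hsplit, Multiset.card_add, hNdef, Multiset.card_map]
    constructor
    · rw [hcards]; push_cast; linarith
    · intro hm2
      by_contra hbig
      push_neg at hbig
      rw [hcards] at hbig
      push_cast at hbig
      have hPm : (Multiset.card Pp : ℤ) = m := by linarith
      have hNm' : (Multiset.card N : ℤ) = m := by linarith
      have hmPp : m ∈ Pp := by
        by_contra hmem'
        have hPpm' : ∀ x ∈ Pp, x ≤ m - 1 := by
          intro x hx
          have h1 := hPpm x hx
          have : x ≠ m := fun h => hmem' (h ▸ hx)
          omega
        have := key (a := m - 1) (by omega) hPpm' hN1 hsumPN hmin'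
        omega
      have hmN : m ∈ N := by
        by_contra hmem'
        have hNm'' : ∀ x ∈ N, x ≤ m - 1 := by
          intro x hx
          have h1 := hNm x hx
          have : x ≠ m := fun h => hmem' (h ▸ hx)
          omega
        have := key (a := m - 1) (by omega) hNm'' hPp1 hsumPN.symm hmin''
        omega
      rcases hmin' {m} {m} (Multiset.singleton_le.mpr hmPp) (Multiset.singleton_le.mpr hmN) rfl
        with ⟨hc, _⟩ | ⟨hc, _⟩
      · simp at hc
      · have hcard1 := congrArg Multiset.card hc
        simp only [Multiset.card_singleton] at hcard1
        omega


private lemma wit1 : IsMinZeroSumSeq (Set.Icc (-1 : ℤ) 1) {1, -1} := by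
  refine ⟨by simp, ?_, by simp, ?_⟩
  · intro x hx
    simp only [Multiset.insert_eq_cons, Multiset.mem_cons, Multiset.mem_singleton] at hx
    rcases hx with rfl | rfl <;> norm_num
  · intro t ht htne
    have hle := ht.le
    have hcard : Multiset.card t ≤ 2 := by
      have := Multiset.card_le_card hle
      simpa using this
    have hne2 : Multiset.card t ≠ 2 := by
      intro h
      exact ht.ne (Multiset.eq_of_le_of_card_le hle (by simp [h]))
    have h1 : Multiset.card t = 1 := by
      have := Multiset.card_pos.mpr htne
      omega
    obtain ⟨x, rfl⟩ := Multiset.card_eq_one.mp h1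
    have hx : x ∈ ({1, -1} : Multiset ℤ) := Multiset.mem_of_le hle (Multiset.mem_singleton_self x)
    simp only [Multiset.insert_eq_cons, Multiset.mem_cons, Multiset.mem_singleton] at hx
    rcases hx with rfl | rfl <;> simp

private lemma wit2 {m : ℕ} (hm : 2 ≤ m) :
    IsMinZeroSumSeq (Set.Icc (-(m:ℤ)) m)
      (Multiset.replicate m ((m:ℤ)-1) + Multiset.replicate (m-1) (-(m:ℤ))) := by
  have hmZ : (2:ℤ) ≤ (m:ℤ) := by exact_mod_cast hm
  have hne' : ((m:ℤ)-1) ≠ (-(m:ℤ)) := by omega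
  refine ⟨?_, ?_, ?_, ?_⟩
  · intro h
    have := congrArg Multiset.card h
    simp only [Multiset.card_add, Multiset.card_replicate, Multiset.card_zero] at this
    omega
  · intro x hx
    rw [Multiset.mem_add] at hx
    rcases hx with hx | hx <;> rw [Multiset.eq_of_mem_replicate hx] <;>
      constructor <;> simp <;> omega
  · rw [Multiset.sum_add, Multiset.sum_replicate, Multiset.sum_replicate,
      nsmul_eq_mul, nsmul_eq_mul, Nat.cast_sub (by omega : 1 ≤ m)]
    push_cast
    ring
  · intro t ht htne hsum0
    set a := Multiset.count ((m:ℤ)-1) t with hadef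
    set b := Multiset.count (-(m:ℤ)) t with hbdef
    have hmemt : ∀ x ∈ t, x = (m:ℤ)-1 ∨ x = -(m:ℤ) := by
      intro x hx
      have hx2 := Multiset.mem_of_le ht.le hx
      rw [Multiset.mem_add] at hx2
      rcases hx2 with h | h
      · exact Or.inl (Multiset.eq_of_mem_replicate h)
      · exact Or.inr (Multiset.eq_of_mem_replicate h)
    have hteq : t = Multiset.replicate a ((m:ℤ)-1) + Multiset.replicate b (-(m:ℤ)) := by
      ext x
      rw [Multiset.count_add, Multiset.count_replicate, Multiset.count_replicate]
      by_cases h1 : x = (m:ℤ)-1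
      · subst h1
        rw [if_pos rfl, if_neg (fun h => hne' h.symm), add_zero, hadef]
      · by_cases h2 : x = -(m:ℤ)
        · subst h2
          rw [if_neg hne', if_pos rfl]
          omega
        · rw [if_neg (fun h => h1 h.symm), if_neg (fun h => h2 h.symm)]
          have : x ∉ t := fun hx => by rcases hmemt x hx with h | h <;> [exact h1 h; exact h2 h]
          simp [Multiset.count_eq_zero_of_notMem this]
    have hcountw1 : Multiset.count ((m:ℤ)-1)
        (Multiset.replicate m ((m:ℤ)-1) + Multiset.replicate (m-1) (-(m:ℤ))) = m := by
      rw [Multiset.count_add, Multiset.count_replicate, Multiset.count_replicate,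
        if_pos rfl, if_neg (fun h => hne' h.symm)]
      omega
    have hcountw2 : Multiset.count (-(m:ℤ))
        (Multiset.replicate m ((m:ℤ)-1) + Multiset.replicate (m-1) (-(m:ℤ))) = m - 1 := by
      rw [Multiset.count_add, Multiset.count_replicate, Multiset.count_replicate,
        if_neg hne', if_pos rfl]
      omega
    have ha : a ≤ m :=
      le_trans (Multiset.count_le_of_le _ ht.le) (le_of_eq hcountw1)
    have hb : b ≤ m - 1 :=
      le_trans (Multiset.count_le_of_le _ ht.le) (le_of_eq hcountw2)
    have hsumt : (a:ℤ) * ((m:ℤ)-1) - (b:ℤ) * (m:ℤ) = 0 := by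
      have := congrArg Multiset.sum hteq
      rw [hsum0, Multiset.sum_add, Multiset.sum_replicate, Multiset.sum_replicate,
        nsmul_eq_mul, nsmul_eq_mul] at this
      linarith [this]
    have hdvd : (m:ℤ) ∣ (a:ℤ) := ⟨(a:ℤ) - (b:ℤ), by linear_combination -hsumt⟩
    have hdvdn : m ∣ a := Int.natCast_dvd_natCast.mp hdvd
    obtain ⟨c, hc⟩ := hdvdn
    have hc1 : c ≤ 1 := by
      by_contra hcgt
      push_neg at hcgt
      have h2 : m * 2 ≤ m * c := Nat.mul_le_mul_left m hcgt
      have h0 : a = m * c := hc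
      nlinarith
    interval_cases c
    · -- a = 0
      have ha0 : a = 0 := by omega
      have hb0 : b = 0 := by
        have : (b:ℤ) * (m:ℤ) = 0 := by rw [ha0] at hsumt; push_cast at hsumt; linarith
        rcases mul_eq_zero.mp this with h | h
        · exact_mod_cast h
        · omega
      rw [hteq, ha0, hb0] at htne
      simp at htne
    · -- a = m
      have ham : a = m := by omega
      have hbm : b = m - 1 := by
        have h1 : ((b:ℤ) - ((m:ℤ)-1)) * (m:ℤ) = 0 := by
          rw [ham] at hsumt
          push_cast at hsumt ⊢
          linarith
        rcases mul_eq_zero.mp h1 with h | h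
        · omega
        · omega
      rw [hteq, ham, hbm] at ht
      exact ht.ne rfl

theorem davenport_symmetric_Icc :
    davenport (Set.Icc (-1 : ℤ) 1) = 2 ∧
    ∀ m : ℕ, 2 ≤ m → davenport (Set.Icc (-(m : ℤ)) m) = ((2 * m - 1 : ℕ) : ℕ∞) := by
  constructor
  · apply le_antisymm
    · unfold davenport
      refine iSup₂_le fun s hs => ?_
      have h := (core (m := 1) le_rfl hs).1
      have h2 : Multiset.card s ≤ 2 := by exact_mod_cast h
      exact_mod_cast Nat.cast_le.mpr h2
    · have h := le_iSup₂ (f := fun (s : Multiset ℤ)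
        (_ : IsMinZeroSumSeq (Set.Icc (-1:ℤ) 1) s) => (Multiset.card s : ℕ∞)) _ wit1
      unfold davenport
      simpa using h
  · intro m hm
    apply le_antisymm
    · unfold davenport
      refine iSup₂_le fun s hs => ?_
      have hmZ : (1:ℤ) ≤ (m:ℤ) := by exact_mod_cast Nat.one_le_of_lt hm
      have h := (core hmZ hs).2 (by exact_mod_cast hm)
      have h2 : Multiset.card s ≤ 2*m - 1 := by omega
      exact Nat.cast_le.mpr h2
    · have h := le_iSup₂ (f := fun (s : Multiset ℤ)
        (_ : IsMinZeroSumSeq (Set.Icc (-(m:ℤ)) m) s) => (Multiset.card s : ℕ∞)) _ (wit2 hm)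
      have hcard : Multiset.card (Multiset.replicate m ((m:ℤ)-1)
          + Multiset.replicate (m-1) (-(m:ℤ))) = 2*m - 1 := by
        rw [Multiset.card_add, Multiset.card_replicate, Multiset.card_replicate]
        omega
      rw [hcard] at h
      unfold davenport
      exact h
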